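/- Let (kₙ) be a strictly increasing sequence of positive integers with ∑ₙ 1/kₙ < ∞, let 1 < μ₀ < M₀, ε ∈ (0,1), and (wₙ) any sequence of complex numbers. If N₀ is such that M₀·∑_{v ≥ N₀} (((1+ε)/(1−ε))^{1/k_v} − 1) < M₀ − μ₀, then [μ₀, M₀] is not covered by the union over v ≥ N₀ of the sets {λ ∈ [μ₀,M₀] : |λ^{k_v}·w_v − 1| < ε}. -/

import Mathlib

open MeasureTheory

lemma stmt_17_aux (K : ℕ) (hK : 0 < K) (μ₀ M₀ ε : ℝ) (hM0 : 0 < M₀)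
    (hμ₀ : 1 < μ₀) (hε0 : 0 < ε) (hε1 : ε < 1) (wv : ℂ) :
    volume {l : ℝ | l ∈ Set.Icc μ₀ M₀ ∧ ‖(l : ℂ) ^ K * wv - 1‖ < ε}
      ≤ ENNReal.ofReal (M₀ * (((1 + ε) / (1 - ε)) ^ ((1:ℝ) / K) - 1)) := by
  have h1ε : 0 < 1 - ε := by linarith
  set r : ℝ := (1 + ε) / (1 - ε) with hr_def
  have hr1 : 1 < r := by rw [hr_def, lt_div_iff₀ h1ε]; linarith
  set S : Set ℝ := {l : ℝ | l ∈ Set.Icc μ₀ M₀ ∧ ‖(l : ℂ) ^ K * wv - 1‖ < ε}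
    with hS_def
  rcases Set.eq_empty_or_nonempty S with hS | ⟨l₀, hl₀⟩
  · rw [hS]; simp
  · set W : ℝ := ‖wv‖ with hW_def
    -- key estimate for members of S
    have hmem : ∀ l ∈ S, 0 < l ∧ 1 - ε < l ^ K * W ∧ l ^ K * W < 1 + ε := by
      intro l hl
      obtain ⟨⟨hl1, hl2⟩, hl3⟩ := hl
      have hlpos : 0 < l := by linarith
      have habs : ‖(l : ℂ) ^ K * wv‖ = l ^ K * W := by
        rw [norm_mul, norm_pow, Complex.norm_real, Real.norm_of_nonneg hlpos.le]
      refine ⟨hlpos, ?_, ?_⟩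
      · have h := norm_sub_norm_le (1 : ℂ) ((l : ℂ) ^ K * wv)
        rw [norm_sub_rev] at h
        simp only [norm_one] at h
        rw [habs] at h; linarith
      · have h := norm_sub_norm_le ((l : ℂ) ^ K * wv) 1
        simp only [norm_one] at h
        rw [habs] at h; linarith
    have hWpos : 0 < W := by
      obtain ⟨hl₀p, hl₀lo, _⟩ := hmem l₀ hl₀
      by_contra h
      push_neg at h
      have : W = 0 := le_antisymm h (norm_nonneg wv)
      rw [this, mul_zero] at hl₀lo; linarith
    set a : ℝ := ((1 - ε) / W) ^ ((K:ℝ)⁻¹) with ha_def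
    set b : ℝ := ((1 + ε) / W) ^ ((K:ℝ)⁻¹) with hb_def
    have ha0 : 0 ≤ a := Real.rpow_nonneg (by positivity) _
    have hab : b = a * r ^ ((K:ℝ)⁻¹) := by
      rw [ha_def, hb_def, ← Real.mul_rpow (by positivity) (by positivity)]
      congr 1
      rw [hr_def]
      field_simp [hWpos.ne', h1ε.ne']
    have hsub : S ⊆ Set.Ioo a b := by
      intro l hl
      obtain ⟨hlpos, hlo, hhi⟩ := hmem l hl
      have haK : a ^ K = (1 - ε) / W := Real.rpow_inv_natCast_pow (by positivity) hK.ne'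
      have hbK : b ^ K = (1 + ε) / W := Real.rpow_inv_natCast_pow (by positivity) hK.ne'
      constructor
      · have : a ^ K < l ^ K := by rw [haK, div_lt_iff₀ hWpos]; linarith
        exact lt_of_pow_lt_pow_left₀ K hlpos.le this
      · have : l ^ K < b ^ K := by rw [hbK, lt_div_iff₀ hWpos]; linarith
        exact lt_of_pow_lt_pow_left₀ K (Real.rpow_nonneg (by positivity) _) this
    have haM : a ≤ M₀ := by
      have := hsub hl₀
      exact le_trans this.1.le hl₀.1.2
    calc volume S ≤ volume (Set.Ioo a b) := measure_mono hsub
      _ = ENNReal.ofReal (b - a) := by rw [Real.volume_Ioo]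
      _ ≤ ENNReal.ofReal (M₀ * (r ^ ((1:ℝ) / K) - 1)) := by
          apply ENNReal.ofReal_le_ofReal
          rw [hab, one_div]
          have h1r : (1:ℝ) ≤ r ^ ((K:ℝ)⁻¹) :=
            Real.one_le_rpow hr1.le (by positivity)
          nlinarith
  
theorem stmt_17 (k : ℕ → ℕ) (hk : StrictMono k) (hkpos : ∀ n, 0 < k n)
    (hsum : Summable (fun n => (1 : ℝ) / k n))
    (μ₀ M₀ : ℝ) (hμ₀ : 1 < μ₀) (hM₀ : μ₀ < M₀)
    (ε : ℝ) (hε : ε ∈ Set.Ioo (0:ℝ) 1) (w : ℕ → ℂ) (N₀ : ℕ)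
    (hN₀ : M₀ * ∑' v : ℕ, (((1 + ε) / (1 - ε)) ^ ((1:ℝ) / k (N₀ + v)) - 1) < M₀ - μ₀) :
    ¬ (Set.Icc μ₀ M₀ ⊆ ⋃ v : ℕ,
      {l : ℝ | l ∈ Set.Icc μ₀ M₀ ∧
        ‖(l : ℂ) ^ k (N₀ + v) * w (N₀ + v) - 1‖ < ε}) := by
  intro hcov
  obtain ⟨hε0, hε1⟩ := hε
  have h1ε : 0 < 1 - ε := by linarith
  set r : ℝ := (1 + ε) / (1 - ε) with hr_def
  have hr1 : 1 < r := by rw [hr_def, lt_div_iff₀ h1ε]; linarith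
  have hrpos : 0 < r := by linarith
  have hM0 : 0 < M₀ := by linarith
  set c : ℕ → ℝ := fun v => r ^ ((1:ℝ) / k (N₀ + v)) - 1 with hc_def
  have hc0 : ∀ v, 0 ≤ c v := fun v => by
    have : (1:ℝ) ≤ r ^ ((1:ℝ) / k (N₀ + v)) :=
      Real.one_le_rpow hr1.le (by positivity)
    simp only [hc_def]; linarith
  have hlogr : 0 ≤ Real.log r := Real.log_nonneg hr1.le
  have hcle : ∀ v, c v ≤ (Real.log r * r) * (1 / k (N₀ + v)) := by
    intro v
    set K := k (N₀ + v) with hKdef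
    have hKpos : 0 < K := hkpos _
    have hK1 : (1:ℝ) ≤ K := by exact_mod_cast hKpos
    set t : ℝ := Real.log r * (1 / K) with ht_def
    have ht0 : 0 ≤ t := by positivity
    have htlog : t ≤ Real.log r := by
      rw [ht_def]
      nlinarith [div_le_one_of_le₀ hK1 (by positivity : (0:ℝ) ≤ (K:ℝ)),
        one_div (K:ℝ)]
    have hrw : c v = Real.exp t - 1 := by
      simp only [hc_def, ht_def]
      rw [Real.rpow_def_of_pos hrpos]
    have hexp1 : Real.exp t - 1 ≤ t * Real.exp t := by
      have h := Real.add_one_le_exp (-t)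
      have hpos := Real.exp_pos t
      have : Real.exp (-t) * Real.exp t = 1 := by
        rw [← Real.exp_add]; simp
      nlinarith
    have hexp2 : Real.exp t ≤ r := by
      calc Real.exp t ≤ Real.exp (Real.log r) := Real.exp_le_exp.2 htlog
        _ = r := Real.exp_log hrpos
    calc c v = Real.exp t - 1 := hrw
      _ ≤ t * Real.exp t := hexp1
      _ ≤ t * r := by nlinarith
      _ = (Real.log r * r) * (1 / K) := by rw [ht_def]; ring
  have hshift : Summable (fun v => (1:ℝ) / k (N₀ + v)) := by
    have := (summable_nat_add_iff N₀).2 hsum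
    simpa [Nat.add_comm] using this
  have hcs : Summable c :=
    Summable.of_nonneg_of_le hc0 hcle (hshift.mul_left _)
  have hbound : ∀ v, volume {l : ℝ | l ∈ Set.Icc μ₀ M₀ ∧
      ‖(l : ℂ) ^ k (N₀ + v) * w (N₀ + v) - 1‖ < ε}
      ≤ ENNReal.ofReal (M₀ * c v) := fun v =>
    stmt_17_aux (k (N₀ + v)) (hkpos _) μ₀ M₀ ε hM0 hμ₀ hε0 hε1 (w (N₀ + v))
  have h1 : ENNReal.ofReal (M₀ - μ₀) ≤ ∑' v, ENNReal.ofReal (M₀ * c v) := by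
    calc ENNReal.ofReal (M₀ - μ₀) = volume (Set.Icc μ₀ M₀) := by
          rw [Real.volume_Icc]
      _ ≤ volume (⋃ v : ℕ, {l : ℝ | l ∈ Set.Icc μ₀ M₀ ∧
            ‖(l : ℂ) ^ k (N₀ + v) * w (N₀ + v) - 1‖ < ε}) :=
          measure_mono hcov
      _ ≤ ∑' v, volume {l : ℝ | l ∈ Set.Icc μ₀ M₀ ∧
            ‖(l : ℂ) ^ k (N₀ + v) * w (N₀ + v) - 1‖ < ε} :=
          measure_iUnion_le _
      _ ≤ ∑' v, ENNReal.ofReal (M₀ * c v) := ENNReal.tsum_le_tsum hbound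
  rw [← ENNReal.ofReal_tsum_of_nonneg (fun v => mul_nonneg hM0.le (hc0 v))
    (hcs.mul_left M₀)] at h1
  rw [tsum_mul_left] at h1
  have h2 : M₀ - μ₀ ≤ M₀ * ∑' v, c v :=
    (ENNReal.ofReal_le_ofReal_iff
      (mul_nonneg hM0.le (tsum_nonneg hc0))).1 h1
  exact absurd hN₀ (not_lt.2 h2)
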